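/- Let q ∈ ℂ with |q| < 1, let d be an odd positive integer, and let χ be a Dirichlet character modulo d with values in ℂ. For every n ≥ 0, the n-th derivative at t = 0 of the function F_{q,χ}(t) = [2]_q·(Σ_{a=1}^{d} (−1)^a q^a χ(a) e^{ta})/(q^d e^{td} + 1) (which is analytic on a neighborhood of 0 where q^d e^{td} + 1 ≠ 0) equals [2]_q·Σ_{m=1}^{∞} (−1)^m q^m χ(m) m^n, the latter series converging absolutely. (That is, l_q(−n, χ) = E_{n,χ,q}, where E_{n,χ,q} are the generalized q-Euler numbers attached to χ defined by F_{q,χ}(t) = Σ_n E_{n,χ,q} t^n/n!, and l_q(s,χ) = [2]_q·Σ_{m=1}^{∞} (−1)^m q^m χ(m) m^{−s}.) -/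

import Mathlib

open Finset Topology Filter

-- norm bound on the character term
lemma aux_norm_term (q : ℂ) {d : ℕ} (χ : DirichletCharacter ℂ d) (m : ℕ) (z : ℂ) :
    ‖(-1:ℂ)^(m+1) * q^(m+1) * χ (((m+1:ℕ)) : ZMod d) * z‖ ≤ ‖q‖^(m+1) * ‖z‖ := by
  rw [norm_mul, norm_mul, norm_mul, norm_pow, norm_pow, norm_neg, norm_one, one_pow, one_mul]
  have h1 : ‖χ (((m+1:ℕ)) : ZMod d)‖ ≤ 1 := χ.norm_le_one _
  calc ‖q‖^(m+1) * ‖χ (((m+1:ℕ)) : ZMod d)‖ * ‖z‖ ≤ ‖q‖^(m+1) * 1 * ‖z‖ := by gcongr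
    _ = ‖q‖^(m+1) * ‖z‖ := by ring

-- summability of the exp series
lemma aux_summable_exp (q : ℂ) {d : ℕ} (χ : DirichletCharacter ℂ d) (t : ℂ)
    (ht : ‖q‖ * Real.exp t.re < 1) :
    Summable (fun m : ℕ => (-1:ℂ)^(m+1) * q^(m+1) * χ (((m+1:ℕ)) : ZMod d)
      * Complex.exp (t * ((m+1:ℕ) : ℂ))) := by
  have hx0 : (0:ℝ) ≤ ‖q‖ * Real.exp t.re := by positivity
  have hgeo : Summable (fun m : ℕ => (‖q‖ * Real.exp t.re) ^ (m+1)) :=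
    ((summable_nat_add_iff 1).2 (summable_geometric_of_lt_one hx0 ht))
  refine Summable.of_norm (Summable.of_nonneg_of_le (fun m => norm_nonneg _) (fun m => ?_) hgeo)
  have hb := aux_norm_term q χ m (Complex.exp (t * ((m+1:ℕ) : ℂ)))
  have he : ‖Complex.exp (t * ((m+1:ℕ) : ℂ))‖ = Real.exp t.re ^ (m+1) := by
    rw [Complex.norm_exp, ← Real.exp_nat_mul]
    congr 1
    simp [Complex.mul_re]
    ring
  rw [he] at hb
  calc _ ≤ ‖q‖^(m+1) * Real.exp t.re ^ (m+1) := hb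
    _ = (‖q‖ * Real.exp t.re) ^ (m+1) := (mul_pow _ _ _).symm


lemma aux_key (q : ℂ) {d : ℕ} (hd : Odd d) (χ : DirichletCharacter ℂ d) (t : ℂ)
    (ht : ‖q‖ * Real.exp t.re < 1)
    (hsum : Summable (fun m : ℕ => (-1:ℂ)^(m+1) * q^(m+1) * χ (((m+1:ℕ)) : ZMod d)
      * Complex.exp (t * ((m+1:ℕ) : ℂ)))) :
    (q ^ d * Complex.exp (t * d) + 1) *
      (∑' m : ℕ, (-1:ℂ)^(m+1) * q^(m+1) * χ (((m+1:ℕ)) : ZMod d)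
        * Complex.exp (t * ((m+1:ℕ) : ℂ)))
    = ∑ a ∈ Finset.Icc 1 d, (-1:ℂ)^a * q^a * χ ((a:ℕ) : ZMod d) * Complex.exp (t * (a:ℕ)) := by
  set f : ℕ → ℂ := fun m => (-1:ℂ)^(m+1) * q^(m+1) * χ (((m+1:ℕ)) : ZMod d)
      * Complex.exp (t * ((m+1:ℕ) : ℂ)) with hf
  set x : ℂ := q ^ d * Complex.exp (t * d) with hx
  have hT := hsum.hasSum
  have hshift : ∀ m : ℕ, x * f m = - f (m + d) := by
    intro m
    have hχ : χ (((m+d+1:ℕ)) : ZMod d) = χ (((m+1:ℕ)) : ZMod d) := by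
      congr 1
      push_cast [ZMod.natCast_self]
      ring
    have hsgn : ((-1:ℂ))^(m+d+1) = -((-1:ℂ))^(m+1) := by
      rw [show m+d+1 = (m+1)+d by ring, pow_add, Odd.neg_one_pow hd]
      ring
    have hexp : Complex.exp (t * ((m+d+1:ℕ) : ℂ))
        = Complex.exp (t * ((m+1:ℕ) : ℂ)) * Complex.exp (t * (d:ℂ)) := by
      rw [← Complex.exp_add]
      congr 1
      push_cast
      ring
    simp only [hf, hx]
    rw [hχ, hsgn, hexp, show m+d+1 = (m+1)+d by ring, pow_add]
    push_cast [hχ]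
    ring
  have h2 : HasSum (fun m => f (m + d)) (-(x * ∑' m, f m)) := by
    have h := hT.mul_left x
    have h' : (fun m => x * f m) = fun m => - f (m + d) := funext hshift
    rw [h'] at h
    simpa using h.neg
  have h4 : ∑' m, f m = -(x * ∑' m, f m) + ∑ i ∈ range d, f i :=
    hT.unique ((hasSum_nat_add_iff d).1 h2)
  have h5 : (x + 1) * (∑' m, f m) = ∑ i ∈ range d, f i := by linear_combination h4
  have h6 : ∑ i ∈ range d, f i
      = ∑ a ∈ Finset.Icc 1 d, (-1:ℂ)^a * q^a * χ ((a:ℕ) : ZMod d) * Complex.exp (t * (a:ℕ)) := by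
    rw [show Finset.Icc 1 d = Finset.Ico 1 (d+1) by rw [Finset.Ico_add_one_right_eq_Icc],
      Finset.sum_Ico_eq_sum_range]
    simp only [Nat.add_sub_cancel]
    refine Finset.sum_congr rfl fun i _ => ?_
    rw [hf]
    rw [show 1 + i = i + 1 by ring]
  rw [show q ^ d * Complex.exp (t * d) + 1 = x + 1 from rfl, h5, h6]

lemma aux_summable_pow (q : ℂ) (hq : ‖q‖ < 1) {d : ℕ} (χ : DirichletCharacter ℂ d) (n : ℕ) :
    Summable (fun m : ℕ =>
      ‖(-1:ℂ)^(m+1) * q^(m+1) * χ (((m+1:ℕ)) : ZMod d) * ((m:ℂ)+1)^n‖) := by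
  have hgeo : Summable (fun m : ℕ => ((m:ℝ)+1)^n * ‖q‖^(m+1)) := by
    have h1 := summable_pow_mul_geometric_of_norm_lt_one (R := ℝ) (r := ‖q‖) n
      (by simpa using hq)
    have h2 := (summable_nat_add_iff 1).2 h1
    refine h2.congr fun m => ?_
    push_cast
    ring
  refine Summable.of_nonneg_of_le (fun m => norm_nonneg _) (fun m => ?_) hgeo
  have hb := aux_norm_term q χ m (((m:ℂ)+1)^n)
  have he : ‖((m:ℂ)+1)^n‖ = ((m:ℝ)+1)^n := by
    rw [norm_pow]
    congr 1
    rw [show ((m:ℂ)+1) = ((m+1:ℕ) : ℂ) by push_cast; ring, Complex.norm_natCast]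
    push_cast
    ring
  rw [he] at hb
  calc _ ≤ ‖q‖^(m+1) * ((m:ℝ)+1)^n := hb
    _ = ((m:ℝ)+1)^n * ‖q‖^(m+1) := by ring

set_option maxHeartbeats 1000000 in
lemma aux_double (q : ℂ) {d : ℕ} (χ : DirichletCharacter ℂ d) (y : ℂ)
    (hy : ‖q‖ * Real.exp ‖y‖ < 1) :
    HasSum (fun n : ℕ => ((1+q) * ((Nat.factorial n) : ℂ)⁻¹ *
        ∑' m : ℕ, (-1:ℂ)^(m+1) * q^(m+1) * χ (((m+1:ℕ)) : ZMod d) * ((m:ℂ)+1)^n) * y ^ n)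
      ((1+q) * ∑' m : ℕ, (-1:ℂ)^(m+1) * q^(m+1) * χ (((m+1:ℕ)) : ZMod d)
        * Complex.exp (y * ((m+1:ℕ) : ℂ)))
    ∧ Summable (fun n : ℕ => ‖((1+q) * ((Nat.factorial n) : ℂ)⁻¹ *
        ∑' m : ℕ, (-1:ℂ)^(m+1) * q^(m+1) * χ (((m+1:ℕ)) : ZMod d) * ((m:ℂ)+1)^n) * y ^ n‖) := by
  have hq : ‖q‖ < 1 :=
    lt_of_le_of_lt (le_mul_of_one_le_right (norm_nonneg q) (Real.one_le_exp (norm_nonneg y))) hy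
  set u : ℕ → ℂ := fun m => (-1:ℂ)^(m+1) * q^(m+1) * χ (((m+1:ℕ)) : ZMod d) with hu
  set F2 : ℕ × ℕ → ℂ := fun p => (1+q) * u p.1 * (y * ((p.1+1:ℕ) : ℂ))^p.2 / ((Nat.factorial p.2) : ℂ)
    with hF2
  -- row norm sums
  have hrow : ∀ m : ℕ, HasSum (fun n => ‖F2 (m,n)‖)
      (‖(1+q) * u m‖ * Real.exp (‖y‖ * ((m:ℝ)+1))) := by
    intro m
    have h := (NormedSpace.expSeries_div_hasSum_exp (‖y‖ * ((m:ℝ)+1))).mul_left ‖(1+q) * u m‖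
    rw [← Real.exp_eq_exp_ℝ] at h
    refine h.congr_fun fun n => ?_
    rw [hF2]
    simp only [norm_div, norm_mul, norm_pow, Complex.norm_natCast]
    push_cast
    ring
  have hbound : ∀ m : ℕ, ‖(1+q) * u m‖ * Real.exp (‖y‖ * ((m:ℝ)+1))
      ≤ ‖(1:ℂ)+q‖ * (‖q‖ * Real.exp ‖y‖)^(m+1) := by
    intro m
    have h1 : ‖u m‖ ≤ ‖q‖^(m+1) := by
      have := aux_norm_term q χ m 1
      simpa [hu] using this
    have h2 : Real.exp (‖y‖ * ((m:ℝ)+1)) = (Real.exp ‖y‖)^(m+1) := by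
      rw [← Real.exp_nat_mul]
      congr 1
      push_cast
      ring
    rw [norm_mul, h2, mul_pow]
    calc ‖(1:ℂ)+q‖ * ‖u m‖ * Real.exp ‖y‖ ^ (m+1)
        ≤ ‖(1:ℂ)+q‖ * ‖q‖^(m+1) * Real.exp ‖y‖ ^ (m+1) := by
          gcongr
      _ = ‖(1:ℂ)+q‖ * (‖q‖^(m+1) * Real.exp ‖y‖ ^ (m+1)) := by ring
  have hx0 : (0:ℝ) ≤ ‖q‖ * Real.exp ‖y‖ := by positivity
  have hgeo : Summable (fun m : ℕ => ‖(1:ℂ)+q‖ * (‖q‖ * Real.exp ‖y‖)^(m+1)) :=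
    (((summable_nat_add_iff 1).2 (summable_geometric_of_lt_one hx0 hy)).mul_left _)
  have hnormsum : Summable (fun p : ℕ × ℕ => ‖F2 p‖) := by
    refine (summable_prod_of_nonneg (fun p => norm_nonneg _)).2
      ⟨fun m => (hrow m).summable, ?_⟩
    refine Summable.of_nonneg_of_le (fun m => tsum_nonneg fun n => norm_nonneg _)
      (fun m => ?_) hgeo
    rw [(hrow m).tsum_eq]
    exact hbound m
  have hS : Summable F2 := hnormsum.of_norm
  -- rows with complex values
  have hrowC : ∀ m : ℕ, HasSum (fun n => F2 (m,n))
      ((1+q) * u m * Complex.exp (y * ((m+1:ℕ) : ℂ))) := by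
    intro m
    have h := (NormedSpace.expSeries_div_hasSum_exp (y * ((m+1:ℕ) : ℂ))).mul_left
      ((1+q) * u m)
    rw [← Complex.exp_eq_exp_ℂ] at h
    refine h.congr_fun fun n => ?_
    rw [hF2]
    simp only []
    rw [mul_div_assoc]
  have hrowsum : HasSum (fun m => (1+q) * u m * Complex.exp (y * ((m+1:ℕ) : ℂ)))
      (∑' p, F2 p) := hS.hasSum.prod_fiberwise hrowC
  have htot : ∑' p, F2 p = (1+q) * ∑' m : ℕ, u m * Complex.exp (y * ((m+1:ℕ) : ℂ)) := by
    rw [← hrowsum.tsum_eq, ← tsum_mul_left]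
    exact tsum_congr fun m => by ring
  -- columns
  have hcolC : ∀ n : ℕ, HasSum (fun m => F2 (m,n))
      (((1+q) * ((Nat.factorial n) : ℂ)⁻¹ * ∑' m : ℕ, u m * ((m:ℂ)+1)^n) * y ^ n) := by
    intro n
    have hb : HasSum (fun m => u m * ((m:ℂ)+1)^n) (∑' m : ℕ, u m * ((m:ℂ)+1)^n) := by
      refine Summable.hasSum (Summable.of_norm ?_)
      simpa [hu, mul_assoc] using aux_summable_pow q hq χ n
    have h := hb.mul_left ((1+q) * y^n / ((Nat.factorial n) : ℂ))
    have heq : (fun m => (1+q) * y^n / ((Nat.factorial n) : ℂ) * (u m * ((m:ℂ)+1)^n))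
        = fun m => F2 (m,n) := by
      funext m
      rw [hF2]
      simp only []
      rw [mul_pow, show (((m+1:ℕ)) : ℂ) = (m:ℂ)+1 by push_cast; ring]
      ring
    rw [heq] at h
    convert h using 1
    · rfl
    rw [div_eq_mul_inv]
    ring
  have hswap : HasSum (fun p : ℕ × ℕ => F2 p.swap) (∑' p, F2 p) :=
    ((Equiv.prodComm ℕ ℕ).hasSum_iff).2 hS.hasSum
  have hcolsum : HasSum (fun n => ((1+q) * ((Nat.factorial n) : ℂ)⁻¹ *
      ∑' m : ℕ, u m * ((m:ℂ)+1)^n) * y ^ n) (∑' p, F2 p) :=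
    hswap.prod_fiberwise hcolC
  constructor
  · have := hcolsum
    rw [htot] at this
    exact this
  · -- norm summability of coefficients
    have hswapnorm : Summable (fun p : ℕ × ℕ => ‖F2 p.swap‖) :=
      ((Equiv.prodComm ℕ ℕ).summable_iff).2 hnormsum
    have hcolnormsum : Summable (fun n : ℕ => ∑' m : ℕ, ‖F2 (m,n)‖) :=
      ((summable_prod_of_nonneg (fun p => norm_nonneg _)).1 hswapnorm).2
    refine Summable.of_nonneg_of_le (fun n => norm_nonneg _) (fun n => ?_) hcolnormsum
    have h1 : ((1+q) * ((Nat.factorial n) : ℂ)⁻¹ *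
        ∑' m : ℕ, (-1:ℂ)^(m+1) * q^(m+1) * χ (((m+1:ℕ)) : ZMod d) * ((m:ℂ)+1)^n) * y ^ n
        = ∑' m : ℕ, F2 (m,n) := ((hcolC n).tsum_eq).symm
    rw [h1]
    exact norm_tsum_le_tsum_norm (hswapnorm.prod_factor n)


set_option maxHeartbeats 1000000 in
/-- For `q ∈ ℂ` with `|q| < 1`, an odd positive integer `d`, and a Dirichlet character `χ`
mod `d` with values in `ℂ`: the function
`F_{q,χ}(t) = [2]_q (∑_{a=1}^d (-1)^a q^a χ(a) e^{ta})/(q^d e^{td} + 1)` is analytic on a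
neighborhood of `0` where `q^d e^{td} + 1 ≠ 0`, and for every `n ≥ 0` its `n`-th derivative at
`t = 0` equals `[2]_q ∑_{m≥1} (-1)^m q^m χ(m) m^n` (the series converging absolutely);
that is, `l_q(-n,χ) = E_{n,χ,q}`. -/
theorem generalized_q_euler_lq_at_neg_integers (q : ℂ) (hq : ‖q‖ < 1)
    (d : ℕ) (hd : Odd d) (hd0 : 0 < d)
    (χ : DirichletCharacter ℂ d) :
    ∃ U : Set ℂ, IsOpen U ∧ (0 : ℂ) ∈ U ∧
      (∀ t ∈ U, q ^ d * Complex.exp (t * d) + 1 ≠ 0) ∧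
      AnalyticOnNhd ℂ
        (fun t => (1 + q) *
          (∑ a ∈ Finset.Icc 1 d,
            (-1 : ℂ) ^ a * q ^ a * χ (a : ZMod d) * Complex.exp (t * a)) /
          (q ^ d * Complex.exp (t * d) + 1)) U ∧
      (∀ n : ℕ,
        Summable (fun m : ℕ =>
          ‖(-1 : ℂ) ^ (m + 1) * q ^ (m + 1) * χ ((m + 1 : ℕ) : ZMod d) * ((m : ℂ) + 1) ^ n‖)) ∧
      (∀ n : ℕ,
        iteratedDeriv n
          (fun t => (1 + q) *
            (∑ a ∈ Finset.Icc 1 d,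
              (-1 : ℂ) ^ a * q ^ a * χ (a : ZMod d) * Complex.exp (t * a)) /
            (q ^ d * Complex.exp (t * d) + 1)) 0
        = (1 + q) *
            ∑' m : ℕ,
              (-1 : ℂ) ^ (m + 1) * q ^ (m + 1) * χ ((m + 1 : ℕ) : ZMod d) * ((m : ℂ) + 1) ^ n) := by
  -- pick the radius
  obtain ⟨r, hrlt, hr0⟩ : ∃ r : ℝ, ‖q‖ * Real.exp r < 1 ∧ 0 < r := by
    have hcont : Filter.Tendsto (fun s : ℝ => ‖q‖ * Real.exp s) (𝓝 0) (𝓝 (‖q‖ * Real.exp 0)) :=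
      ((continuous_const.mul Real.continuous_exp).tendsto 0)
    have h1 : ∀ᶠ s in 𝓝 (0:ℝ), ‖q‖ * Real.exp s < 1 :=
      hcont.eventually_lt_const (by simpa using hq)
    have h2 : ∀ᶠ s in 𝓝[>] (0:ℝ), ‖q‖ * Real.exp s < 1 :=
      h1.filter_mono nhdsWithin_le_nhds
    have h3 : ∀ᶠ s in 𝓝[>] (0:ℝ), 0 < s :=
      eventually_nhdsWithin_of_forall fun s hs => hs
    exact (h2.and h3).exists
  set U : Set ℂ := Metric.ball (0:ℂ) r with hUdef
  have h0U : (0:ℂ) ∈ U := by simpa [hUdef] using hr0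
  have hU : ∀ t ∈ U, ‖q‖ * Real.exp t.re < 1 := by
    intro t ht
    have h1 : t.re ≤ ‖t‖ := by exact Complex.re_le_norm t
    have h2 : ‖t‖ < r := by simpa [hUdef] using ht
    calc ‖q‖ * Real.exp t.re ≤ ‖q‖ * Real.exp r := by
          exact mul_le_mul_of_nonneg_left (Real.exp_le_exp.2 (lt_of_le_of_lt h1 h2).le)
            (norm_nonneg q)
      _ < 1 := hrlt
  have hne : ∀ t ∈ U, q ^ d * Complex.exp (t * d) + 1 ≠ 0 := by
    intro t ht h
    have hx : ‖q ^ d * Complex.exp (t * (d:ℂ))‖ < 1 := by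
      rw [norm_mul, norm_pow, Complex.norm_exp]
      have h3 : (t * (d:ℂ)).re = t.re * d := by simp [Complex.mul_re]
      rw [h3, mul_comm t.re (d:ℝ), Real.exp_nat_mul]
      calc ‖q‖^d * Real.exp t.re ^ d = (‖q‖ * Real.exp t.re)^d := (mul_pow _ _ _).symm
        _ < 1 := pow_lt_one₀ (by positivity) (hU t ht) hd0.ne'
    rw [show q ^ d * Complex.exp (t * (d:ℂ)) = -1 by linear_combination h] at hx
    simp at hx
  refine ⟨U, Metric.isOpen_ball, h0U, hne, ?_, fun n => aux_summable_pow q hq χ n, ?_⟩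
  · -- analyticity
    intro t ht
    refine AnalyticAt.div ?_ ?_ (hne t ht)
    · refine analyticAt_const.mul (Finset.analyticAt_fun_sum _ fun a _ => ?_)
      exact analyticAt_const.mul ((analyticAt_id.mul analyticAt_const).cexp)
    · exact (analyticAt_const.mul ((analyticAt_id.mul analyticAt_const).cexp)).add
        analyticAt_const
  · -- derivatives
    set G : ℂ → ℂ := fun t => (1 + q) *
      ∑' m : ℕ, (-1:ℂ)^(m+1) * q^(m+1) * χ (((m+1:ℕ)) : ZMod d)
        * Complex.exp (t * ((m+1:ℕ) : ℂ)) with hGdef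
    have hFG : Set.EqOn (fun t => (1 + q) *
          (∑ a ∈ Finset.Icc 1 d,
            (-1 : ℂ) ^ a * q ^ a * χ (a : ZMod d) * Complex.exp (t * a)) /
          (q ^ d * Complex.exp (t * d) + 1)) G U := by
      intro t ht
      have hkey := aux_key q hd χ t (hU t ht) (aux_summable_exp q χ t (hU t ht))
      have hD := hne t ht
      simp only [hGdef]
      rw [div_eq_iff hD, ← hkey]
      ring
    -- power series of G
    set a : ℕ → ℂ := fun n => (1+q) * ((Nat.factorial n : ℂ))⁻¹ *
      ∑' m : ℕ, (-1:ℂ)^(m+1) * q^(m+1) * χ (((m+1:ℕ)) : ZMod d) * ((m:ℂ)+1)^n with hadef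
    set p : FormalMultilinearSeries ℂ ℂ ℂ := FormalMultilinearSeries.ofScalars ℂ a with hpdef
    have hyy : ∀ y : ℂ, ‖y‖ < r → ‖q‖ * Real.exp ‖y‖ < 1 := by
      intro y hy
      calc ‖q‖ * Real.exp ‖y‖ ≤ ‖q‖ * Real.exp r := by
            exact mul_le_mul_of_nonneg_left (Real.exp_le_exp.2 hy.le) (norm_nonneg q)
        _ < 1 := hrlt
    have hps : HasFPowerSeriesOnBall G p 0 (ENNReal.ofReal r) := by
      refine ⟨?_, ENNReal.ofReal_pos.2 hr0, ?_⟩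
      · refine ENNReal.le_of_forall_nnreal_lt fun s hs => ?_
        have hsr : (s:ℝ) < r := by
          rw [← ENNReal.ofReal_coe_nnreal] at hs
          exact (ENNReal.ofReal_lt_ofReal_iff hr0).1 hs
        have hns : ‖((s:ℝ):ℂ)‖ = (s:ℝ) := by
          rw [Complex.norm_real, Real.norm_eq_abs, abs_of_nonneg s.coe_nonneg]
        have hlt : ‖((s:ℝ):ℂ)‖ < r := by rw [hns]; exact hsr
        have hsum2 := (aux_double q χ ((s:ℝ):ℂ) (hyy _ hlt)).2
        apply FormalMultilinearSeries.le_radius_of_summable_norm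
        refine hsum2.congr fun n => ?_
        rw [norm_mul, norm_pow, hns, FormalMultilinearSeries.ofScalars_norm]
      · intro y hy
        rw [Metric.emetric_ball] at hy
        have hy' : ‖y‖ < r := by simpa using hy
        have hd1 := (aux_double q χ y (hyy y hy')).1
        rw [zero_add]
        refine hd1.congr_fun fun n => ?_
        rw [hpdef, FormalMultilinearSeries.ofScalars_apply_eq, smul_eq_mul, hadef]
    intro n
    have hev : (fun t => (1 + q) *
          (∑ a ∈ Finset.Icc 1 d,
            (-1 : ℂ) ^ a * q ^ a * χ (a : ZMod d) * Complex.exp (t * a)) /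
          (q ^ d * Complex.exp (t * d) + 1)) =ᶠ[𝓝 (0:ℂ)] G :=
      Filter.eventuallyEq_of_mem (Metric.isOpen_ball.mem_nhds h0U) hFG
    rw [hev.iteratedDeriv_eq n]
    have h1 := hps.factorial_smul (y := (1:ℂ)) n
    have h2 : iteratedDeriv n G 0 = iteratedFDeriv ℂ n G 0 (fun _ => 1) :=
      iteratedDeriv_eq_iteratedFDeriv
    rw [h2, ← h1, hpdef, FormalMultilinearSeries.ofScalars_apply_eq, hadef]
    have hfac : ((Nat.factorial n : ℂ)) ≠ 0 := Nat.cast_ne_zero.2 (Nat.factorial_ne_zero n)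
    simp only [one_pow, smul_eq_mul, nsmul_eq_mul]
    field_simp
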